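/- Let X be a real n×p matrix whose columns are linearly independent, Y ∈ ℝⁿ, λ ≥ 0, let C be a p×p real diagonal matrix with diagonal entries in {−1, 0, 1}, set S := C Xᵀ X C, let S⁻ satisfy the four Penrose equations for S with S S⁻ = S⁻ S = C², and put û := S⁻ (C Xᵀ Y − λ C² 𝟙). If every entry of û is nonnegative, then β̂ := C û equals C S⁻ C (Xᵀ Y − λ C 𝟙) and β̂ minimizes the lasso criterion over the closed orthant determined by C: for every u ∈ ℝᵖ with nonnegative entries, L(β̂) ≤ L(C u), where L(β) = ½‖Y − Xβ‖₂² + λ‖β‖₁. -/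
import Mathlib

open Matrix BigOperators

/-- `B` is a Moore–Penrose generalized inverse of `A`:
the four Penrose equations hold. -/
def IsMoorePenrose {p : ℕ} (A B : Matrix (Fin p) (Fin p) ℝ) : Prop :=
  A * B * A = A ∧ B * A * B = B ∧ (A * B)ᵀ = A * B ∧ (B * A)ᵀ = B * A

lemma quad_min_aux {n p : ℕ} (A : Matrix (Fin n) (Fin p) ℝ) (Y : Fin n → ℝ)
    (e : Fin p → ℝ) (v u : Fin p → ℝ)
    (hgrad : ∀ j, Aᵀ.mulVec Y j - (Aᵀ * A).mulVec v j = e j) :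
    (1 / 2) * ∑ i, (Y i - A.mulVec v i) ^ 2 + ∑ j, e j * v j ≤
      (1 / 2) * ∑ i, (Y i - A.mulVec u i) ^ 2 + ∑ j, e j * u j := by
  set w := A.mulVec v with hw
  set z := A.mulVec u with hz
  have hcross : ∑ j, e j * (u j - v j) = ∑ i, (Y i - w i) * (z i - w i) := by
    have he : ∀ j, e j = ∑ i, A i j * (Y i - w i) := by
      intro j
      rw [← hgrad j, ← mulVec_mulVec]
      simp only [mulVec, dotProduct, transpose_apply, hw]
      rw [← Finset.sum_sub_distrib]
      exact Finset.sum_congr rfl fun i _ => by ring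
    calc ∑ j, e j * (u j - v j)
        = ∑ j, ∑ i, A i j * (Y i - w i) * (u j - v j) := by
          refine Finset.sum_congr rfl fun j _ => ?_
          rw [he j, Finset.sum_mul]
      _ = ∑ i, ∑ j, A i j * (Y i - w i) * (u j - v j) := Finset.sum_comm
      _ = ∑ i, (Y i - w i) * (z i - w i) := by
          refine Finset.sum_congr rfl fun i _ => ?_
          have hzw : z i - w i = ∑ j, A i j * (u j - v j) := by
            simp only [hz, hw, mulVec, dotProduct]
            rw [← Finset.sum_sub_distrib]
            exact Finset.sum_congr rfl fun j _ => by ring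
          rw [hzw, Finset.mul_sum]
          refine Finset.sum_congr rfl fun j _ => ?_
          ring
  have hexp : ∑ i, (Y i - z i) ^ 2
      = ∑ i, (Y i - w i) ^ 2 + ∑ i, (z i - w i) ^ 2
        - 2 * ∑ i, (Y i - w i) * (z i - w i) := by
    rw [Finset.mul_sum, ← Finset.sum_add_distrib, ← Finset.sum_sub_distrib]
    refine Finset.sum_congr rfl fun i _ => ?_
    ring
  have hsq : (0 : ℝ) ≤ ∑ i, (z i - w i) ^ 2 :=
    Finset.sum_nonneg fun i _ => sq_nonneg _
  have hsplit : ∑ j, e j * u j - ∑ j, e j * v j = ∑ j, e j * (u j - v j) := by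
    rw [← Finset.sum_sub_distrib]
    refine Finset.sum_congr rfl fun j _ => ?_
    ring
  linarith [hexp, hsq, hsplit.symm ▸ hcross]

theorem orthant_lasso_estimate_minimizes_on_orthant {n p : ℕ}
    (X : Matrix (Fin n) (Fin p) ℝ)
    (hX : LinearIndependent ℝ (fun j : Fin p => fun i : Fin n => X i j))
    (Y : Fin n → ℝ) (lam : ℝ) (hlam : 0 ≤ lam)
    (C : Matrix (Fin p) (Fin p) ℝ) (hdiag : C.IsDiag)
    (hent : ∀ i, C i i = -1 ∨ C i i = 0 ∨ C i i = 1)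
    (Sinv : Matrix (Fin p) (Fin p) ℝ)
    (hMP : IsMoorePenrose (C * Xᵀ * X * C) Sinv)
    (hleft : (C * Xᵀ * X * C) * Sinv = C * C)
    (hright : Sinv * (C * Xᵀ * X * C) = C * C)
    (uhat : Fin p → ℝ)
    (huhat : uhat = Sinv.mulVec ((C * Xᵀ).mulVec Y - lam • (C * C).mulVec (fun _ => (1 : ℝ))))
    (hpos : ∀ j, 0 ≤ uhat j)
    (L : (Fin p → ℝ) → ℝ)
    (hL : ∀ β, L β = (1 / 2) * ∑ i, (Y i - X.mulVec β i) ^ 2 + lam * ∑ j, |β j|) :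
    C.mulVec uhat
        = (C * Sinv * C).mulVec (Xᵀ.mulVec Y - lam • C.mulVec (fun _ => (1 : ℝ)))
    ∧ ∀ u : Fin p → ℝ, (∀ j, 0 ≤ u j) → L (C.mulVec uhat) ≤ L (C.mulVec u) := by
  have hCd : C = Matrix.diagonal C.diag := hdiag.diagonal_diag.symm
  have hCT : Cᵀ = C := by rw [hCd, diagonal_transpose]
  have hdd : ∀ q : ℝ, q = -1 ∨ q = 0 ∨ q = 1 → q * q * q = q := by
    rintro q (h | h | h) <;> rw [h] <;> norm_num
  have hC3 : C * C * C = C := by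
    conv_lhs => rw [hCd, diagonal_mul_diagonal, diagonal_mul_diagonal]
    conv_rhs => rw [hCd]
    exact congrArg diagonal (funext fun i => hdd _ (hent i))
  constructor
  · rw [huhat]
    simp only [mulVec_sub, mulVec_smul, mulVec_mulVec, ← Matrix.mul_assoc]
  · intro u hu
    have hAT : (X * C)ᵀ = C * Xᵀ := by rw [transpose_mul, hCT]
    have hS : (X * C)ᵀ * (X * C) = C * Xᵀ * X * C := by
      rw [hAT]; simp only [Matrix.mul_assoc]
    have hSu : (C * Xᵀ * X * C).mulVec uhat
        = (C * Xᵀ).mulVec Y - lam • (C * C).mulVec (fun _ => (1 : ℝ)) := by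
      rw [huhat, mulVec_mulVec, hleft]
      simp only [mulVec_sub, mulVec_smul, mulVec_mulVec, ← Matrix.mul_assoc, hC3]
    set e : Fin p → ℝ := fun j => lam * (C j j) ^ 2 with he
    have hgrad : ∀ j, (X * C)ᵀ.mulVec Y j - ((X * C)ᵀ * (X * C)).mulVec uhat j = e j := by
      intro j
      rw [hS, hSu, hAT]
      have h1 : ((C * C).mulVec (fun _ => (1 : ℝ))) j = (C j j) ^ 2 := by
        conv_lhs => rw [hCd]
        rw [diagonal_mul_diagonal, mulVec_diagonal]
        show C j j * C j j * 1 = C j j ^ 2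
        ring
      simp only [Pi.sub_apply, Pi.smul_apply, smul_eq_mul, h1, he]
      ring
    have habs : ∀ v : Fin p → ℝ, (∀ j, 0 ≤ v j) →
        lam * ∑ j, |C.mulVec v j| = ∑ j, e j * v j := by
      intro v hv
      rw [Finset.mul_sum]
      refine Finset.sum_congr rfl fun j _ => ?_
      have hCv : C.mulVec v j = C j j * v j := by
        conv_lhs => rw [hCd]
        rw [mulVec_diagonal]
        rfl
      rw [hCv, abs_mul, abs_of_nonneg (hv j)]
      show lam * (|C j j| * v j) = lam * C j j ^ 2 * v j
      rcases hent j with h | h | h <;> rw [h] <;> norm_num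
    have hform : ∀ v : Fin p → ℝ, (∀ j, 0 ≤ v j) →
        L (C.mulVec v) = (1 / 2) * ∑ i, (Y i - (X * C).mulVec v i) ^ 2 + ∑ j, e j * v j := by
      intro v hv
      rw [hL, habs v hv]
      simp only [mulVec_mulVec]
    rw [hform uhat hpos, hform u hu]
    exact quad_min_aux (X * C) Y e uhat u hgrad
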